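/- arXiv:2205.14003 — 6 statements merged into one kernel-verified Lean document; each statement's English description precedes it below -/
import Mathlib

section
/- Let a group G act on a set X, let x₀ ∈ X be fixed by G, and let step : X × X → X and choice : X → Set X be G-equivariant (step(g·b, g·c) = g·step(b,c) and choice(g·b) = g·choice(b)). Define P to be the set of finite sequences (b₁,…,bₙ) with n ≥ 2, b₁ = x₀, bₙ₋₁ = bₙ, bᵢ₋₁ ≠ bᵢ for all 1 < i < n, and for each i < n there exists c ∈ choice(bᵢ) with bᵢ₊₁ = step(bᵢ, c). Suppose some (b₁*,…,bₖ*) ∈ P satisfies: for every i < k, choice(bᵢ*) is an orbit of the subgroup of G fixing each of b₁*,…,bᵢ* pointwise. Then P is an orbit of G under the coordinatewise action on sequences; in particular all sequences in P have the same length k. -/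
/-- `l` is a path of the iteration-with-choice process: `l = (b₁, …, bₙ)` with
`n ≥ 2`, `b₁ = x₀`, `bₙ₋₁ = bₙ`, `bᵢ₋₁ ≠ bᵢ` for all `1 < i < n`, and each
`bᵢ₊₁` is obtained as `step bᵢ c` for some `c ∈ choice bᵢ`. (0-based indexing.) -/
def IsWPath {X : Type*} (x₀ : X) (step : X → X → X) (choice : X → Set X)
    (l : List X) : Prop :=
  2 ≤ l.length ∧
  l[0]? = some x₀ ∧
  l[l.length - 2]? = l[l.length - 1]? ∧
  (∀ i, i + 2 < l.length → l[i]? ≠ l[i + 1]?) ∧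
  (∀ i, i + 1 < l.length →
    ∃ b c, l[i]? = some b ∧ c ∈ choice b ∧ l[i + 1]? = some (step b c))

/-- The path `l` is witnessed: for every index `i` with `i + 1 < l.length`,
the choice set of `l[i]` is an orbit of the subgroup of `G` fixing
`l[0], …, l[i]` pointwise. -/
def Witnessed (G : Type*) {X : Type*} [Group G] [MulAction G X]
    (choice : X → Set X) (l : List X) : Prop :=
  ∀ i, i + 1 < l.length → ∀ b, l[i]? = some b → ∀ c ∈ choice b,
    choice b = {d | ∃ g : G, (∀ j ≤ i, ∀ x, l[j]? = some x → g • x = x) ∧ d = g • c}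

/-- Witnessed-path lemma: if some path of the iteration-with-choice process is
witnessed, then the set of all paths is an orbit of `G` under the coordinatewise
action on sequences; in particular all paths have the same length. -/
theorem witnessed_path_orbit {G X : Type*} [Group G] [MulAction G X]
    (x₀ : X) (hx₀ : ∀ g : G, g • x₀ = x₀)
    (step : X → X → X) (choice : X → Set X)
    (hstep : ∀ (g : G) (b c : X), step (g • b) (g • c) = g • step b c)
    (hchoice : ∀ (g : G) (b : X), choice (g • b) = (fun c => g • c) '' choice b)
    (p : List X) (hp : IsWPath x₀ step choice p) (hw : Witnessed G choice p) :
    (∀ q : List X, IsWPath x₀ step choice q ↔ ∃ g : G, q = p.map (fun x => g • x)) ∧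
    (∀ q : List X, IsWPath x₀ step choice q → q.length = p.length) := by
  obtain ⟨hplen, hp0, hpend, hpne, hpstep⟩ := hp
  -- Key lemma: along any path `q`, we can match the first `m` entries with `g • p`.
  have key : ∀ m, ∀ q : List X, IsWPath x₀ step choice q → m ≤ p.length →
      m ≤ q.length → ∃ g : G, ∀ j < m, ∀ x : X, p[j]? = some x → q[j]? = some (g • x) := by
    intro m
    induction m with
    | zero => exact fun q _ _ _ => ⟨1, fun j hj => absurd hj (Nat.not_lt_zero j)⟩
    | succ i ih =>
      intro q hq hmp hmq
      obtain ⟨hqlen, hq0, hqend, hqne, hqstep⟩ := hq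
      match i with
      | 0 =>
        refine ⟨1, fun j hj x hx => ?_⟩
        have hj0 : j = 0 := Nat.lt_one_iff.mp hj
        subst hj0
        have hxx : x₀ = x := by
          have := hp0.symm.trans hx
          injection this
        rw [one_smul, ← hxx, hq0]
      | i + 1 =>
        obtain ⟨g, hg⟩ := ih q ⟨hqlen, hq0, hqend, hqne, hqstep⟩
          (Nat.le_of_succ_le hmp) (Nat.le_of_succ_le hmq)
        obtain ⟨b, c, hpb, hc, hpsucc⟩ := hpstep i hmp
        obtain ⟨b', c', hqb, hc', hqsucc⟩ := hqstep i hmq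
        have hqb' : q[i]? = some (g • b) := hg i (Nat.lt_succ_self i) b hpb
        have hb' : b' = g • b := by
          have := hqb.symm.trans hqb'
          injection this
        subst hb'
        rw [hchoice] at hc'
        obtain ⟨c₂, hc₂, rfl⟩ := hc'
        have hwit := hw i hmp b hpb c hc
        have hc₂' : c₂ ∈ {d | ∃ g : G, (∀ j ≤ i, ∀ x, p[j]? = some x → g • x = x) ∧ d = g • c} :=
          hwit ▸ hc₂
        obtain ⟨h, hfix, rfl⟩ := hc₂'
        refine ⟨g * h, fun j hj x hx => ?_⟩
        rcases Nat.lt_succ_iff_lt_or_eq.mp hj with hj' | rfl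
        · rw [mul_smul, hfix j (Nat.lt_succ_iff.mp hj') x hx]
          exact hg j hj' x hx
        · have hxval : step b c = x := by
            have := hpsucc.symm.trans hx
            injection this
          have hhb : h • b = b := hfix i le_rfl b hpb
          rw [hqsucc]
          congr 1
          calc step (g • b) (g • h • c) = g • step b (h • c) := hstep g b (h • c)
            _ = g • step (h • b) (h • c) := by rw [hhb]
            _ = g • h • step b c := by rw [hstep]
            _ = (g * h) • step b c := (mul_smul g h _).symm
            _ = (g * h) • x := by rw [hxval]
  -- All paths have the same length.
  have hlen : ∀ q : List X, IsWPath x₀ step choice q → q.length = p.length := by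
    intro q hq
    have hqlen := hq.1
    have hqend := hq.2.2.1
    have hqne := hq.2.2.2.1
    by_contra hne
    rcases Nat.lt_or_ge q.length p.length with hlt | hge
    · obtain ⟨g, hg⟩ := key q.length q hq (le_of_lt hlt) le_rfl
      obtain ⟨y, hy⟩ : ∃ y, p[q.length - 2]? = some y :=
        ⟨p[q.length - 2]'(by omega), List.getElem?_eq_getElem (by omega)⟩
      obtain ⟨z, hz⟩ : ∃ z, p[q.length - 1]? = some z :=
        ⟨p[q.length - 1]'(by omega), List.getElem?_eq_getElem (by omega)⟩
      have h1 := hg (q.length - 2) (by omega) y hy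
      have h2 := hg (q.length - 1) (by omega) z hz
      rw [hqend, h2] at h1
      have hyz : y = z := by
        have : g • z = g • y := by injection h1
        exact (smul_left_cancel g this).symm
      have e : q.length - 2 + 1 = q.length - 1 := by omega
      exact hpne (q.length - 2) (by omega) (by rw [hy, e, hz, hyz])
    · have hgt : p.length < q.length := lt_of_le_of_ne hge (fun h => hne h.symm)
      obtain ⟨g, hg⟩ := key p.length q hq le_rfl (le_of_lt hgt)
      obtain ⟨y, hy⟩ : ∃ y, p[p.length - 2]? = some y :=
        ⟨p[p.length - 2]'(by omega), List.getElem?_eq_getElem (by omega)⟩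
      have hz : p[p.length - 1]? = some y := by
        have e : p.length - 2 + 1 = p.length - 1 := by omega
        rw [← hpend, hy]
      have h1 := hg (p.length - 2) (by omega) y hy
      have h2 := hg (p.length - 1) (by omega) y hz
      have e : p.length - 2 + 1 = p.length - 1 := by omega
      exact hqne (p.length - 2) (by omega) (by rw [h1, e, h2])
  refine ⟨fun q => ⟨fun hq => ?_, ?_⟩, hlen⟩
  · obtain ⟨g, hg⟩ := key p.length q hq le_rfl (le_of_eq (hlen q hq).symm)
    refine ⟨g, List.ext_getElem? fun i => ?_⟩
    rw [List.getElem?_map]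
    rcases Nat.lt_or_ge i p.length with h | h
    · obtain ⟨y, hy⟩ : ∃ y, p[i]? = some y :=
        ⟨p[i]'h, List.getElem?_eq_getElem h⟩
      rw [hy, hg i h y hy]
      rfl
    · rw [List.getElem?_eq_none h, List.getElem?_eq_none (by rw [hlen q hq]; exact h)]
      rfl
  · rintro ⟨g, rfl⟩
    refine ⟨by simpa using hplen, ?_, ?_, ?_, ?_⟩
    · rw [List.getElem?_map, hp0]
      simp [hx₀]
    · simp only [List.length_map, List.getElem?_map, hpend]
    · intro i hi hcontra
      rw [List.length_map] at hi
      refine hpne i hi ?_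
      rw [List.getElem?_map, List.getElem?_map] at hcontra
      exact Option.map_injective (MulAction.injective g) hcontra
    · intro i hi
      rw [List.length_map] at hi
      obtain ⟨b, c, hb, hc, hsucc⟩ := hpstep i hi
      refine ⟨g • b, g • c, ?_, ?_, ?_⟩
      · rw [List.getElem?_map, hb]; rfl
      · rw [hchoice]; exact ⟨c, hc, rfl⟩
      · rw [List.getElem?_map, hsucc, hstep]; rfl
end

section
/- Under the hypotheses of the witnessed-path lemma (G acting on X, G-fixed base point x₀, equivariant step and choice, and some maximal halting path (b₁*,…,bₖ*) whose choice sets choice(bᵢ*) are orbits of the pointwise stabilizer of (b₁*,…,bᵢ*)), the set {bₙ : (b₁,…,bₙ) ∈ P} of reached fixed points is an orbit of G. -/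
section Aux
variable {G X : Type*} [Group G] [MulAction G X]
variable (x₀ : X) (step : X → X → X) (choice : X → Set X)

lemma smul_wpath (hx₀ : ∀ g : G, g • x₀ = x₀)
    (hstep : ∀ (g : G) (b c : X), step (g • b) (g • c) = g • step b c)
    (hchoice : ∀ (g : G) (b : X), choice (g • b) = (fun c => g • c) '' choice b)
    (g : G) (l : List X) (hl : IsWPath x₀ step choice l) :
    IsWPath x₀ step choice (l.map (g • ·)) := by
  obtain ⟨h2, h0, hlast, hne, hstep'⟩ := hl
  have hinj : Function.Injective (Option.map (g • · : X → X)) :=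
    Option.map_injective (MulAction.injective g)
  refine ⟨by simpa using h2, ?_, ?_, ?_, ?_⟩
  · rw [List.getElem?_map, h0]; simp [hx₀]
  · simp only [List.getElem?_map, List.length_map]
    rw [hlast]
  · intro i hi h
    simp only [List.length_map] at hi
    simp only [List.getElem?_map] at h
    exact hne i hi (hinj h)
  · intro i hi
    simp only [List.length_map] at hi
    obtain ⟨b, c, hb, hc, hs⟩ := hstep' i hi
    refine ⟨g • b, g • c, ?_, ?_, ?_⟩
    · rw [List.getElem?_map, hb]; rfl
    · rw [hchoice]; exact ⟨c, hc, rfl⟩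
    · rw [List.getElem?_map, hs, Option.map_some, hstep]

lemma wpath_key
    (hstep : ∀ (g : G) (b c : X), step (g • b) (g • c) = g • step b c)
    (hchoice : ∀ (g : G) (b : X), choice (g • b) = (fun c => g • c) '' choice b)
    (p : List X) (hp : IsWPath x₀ step choice p)
    (hw : Witnessed G choice p) (l : List X) (hl : IsWPath x₀ step choice l) :
    ∀ i, i < min l.length p.length →
      ∃ g : G, ∀ j ≤ i, l[j]? = (p[j]?).map (g • ·) := by
  intro i
  induction i with
  | zero =>
    intro _
    refine ⟨1, fun j hj => ?_⟩
    interval_cases j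
    rw [hl.2.1, hp.2.1]
    simp
  | succ i ih =>
    intro hi
    obtain ⟨g, hg⟩ := ih (lt_of_le_of_lt (Nat.le_succ i) hi)
    have hil : i + 1 < l.length := lt_of_lt_of_le hi (min_le_left _ _)
    have hip : i + 1 < p.length := lt_of_lt_of_le hi (min_le_right _ _)
    obtain ⟨b, c, hb, hc, hs⟩ := hl.2.2.2.2 i hil
    obtain ⟨a, c₀, ha, hc₀, hs₀⟩ := hp.2.2.2.2 i hip
    have hba : b = g • a := by
      have := hg i le_rfl
      rw [hb, ha] at this
      simpa using this
    rw [hba, hchoice] at hc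
    obtain ⟨c', hc', hcc⟩ := hc
    rw [hw i hip a ha c₀ hc₀] at hc'
    obtain ⟨h, hh, rfl⟩ := hc'
    refine ⟨g * h, fun j hj => ?_⟩
    rcases Nat.lt_succ_iff_lt_or_eq.mp (Nat.lt_succ_of_le hj) with hj' | rfl
    · have hjp : j < p.length := lt_of_le_of_lt (Nat.le_of_lt_succ (Nat.lt_succ_of_lt hj')) hip
      obtain ⟨x, hx⟩ : ∃ x, p[j]? = some x := ⟨_, List.getElem?_eq_getElem hjp⟩
      have := hg j (Nat.le_of_lt_succ hj')
      rw [hx] at this ⊢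
      rw [this]
      simp [mul_smul, hh j (Nat.le_of_lt_succ hj') x hx]
    · rw [hs, hs₀]
      have hha : h • a = a := hh i le_rfl a ha
      have : (g * h) • step a c₀ = step b c := by
        rw [← hstep (g * h), hba, mul_smul, mul_smul, hha]
        exact congrArg _ hcc
      simp [this]

end Aux

/-- If some maximal halting path of the iteration-with-choice process is
witnessed, then the set of reached fixed points (the last entries of all
paths) is an orbit of `G`. -/
theorem witnessed_fixed_points_orbit {G X : Type*} [Group G] [MulAction G X]
    (x₀ : X) (hx₀ : ∀ g : G, g • x₀ = x₀)
    (step : X → X → X) (choice : X → Set X)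
    (hstep : ∀ (g : G) (b c : X), step (g • b) (g • c) = g • step b c)
    (hchoice : ∀ (g : G) (b : X), choice (g • b) = (fun c => g • c) '' choice b)
    (p : List X) (hp : IsWPath x₀ step choice p) (hw : Witnessed G choice p) :
    ∃ x : X, {y : X | ∃ l : List X, IsWPath x₀ step choice l ∧ l.getLast? = some y}
      = MulAction.orbit G x := by
  have h2p : 2 ≤ p.length := hp.1
  have hlp : p.length - 1 < p.length := by omega
  refine ⟨p[p.length - 1]'hlp, Set.ext fun y => ⟨?_, ?_⟩⟩
  · rintro ⟨l, hl, hy⟩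
    have h2l : 2 ≤ l.length := hl.1
    -- lengths are equal
    have hlen : l.length = p.length := by
      by_contra hne
      rcases Nat.lt_or_ge l.length p.length with hlt | hge
      · -- l shorter: use alignment up to l.length - 1
        obtain ⟨g, hg⟩ := wpath_key x₀ step choice hstep hchoice p hp hw l hl
          (l.length - 1) (by omega)
        have e1 := hg (l.length - 2) (by omega)
        have e2 := hg (l.length - 1) le_rfl
        have := hl.2.2.1
        rw [e1, e2] at this
        have hpe : p[l.length - 2]? = p[l.length - 1]? :=
          Option.map_injective (MulAction.injective g) this
        have := hp.2.2.2.1 (l.length - 2) (by omega)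
        rw [show l.length - 2 + 1 = l.length - 1 by omega] at this
        exact this hpe
      · have hlt : p.length < l.length := by omega
        obtain ⟨g, hg⟩ := wpath_key x₀ step choice hstep hchoice p hp hw l hl
          (p.length - 1) (by omega)
        have e1 := hg (p.length - 2) (by omega)
        have e2 := hg (p.length - 1) le_rfl
        have := hl.2.2.2.1 (p.length - 2) (by omega)
        rw [show p.length - 2 + 1 = p.length - 1 by omega, e1, e2,
          hp.2.2.1] at this
        exact this rfl
    obtain ⟨g, hg⟩ := wpath_key x₀ step choice hstep hchoice p hp hw l hl
      (p.length - 1) (by omega)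
    have := hg (p.length - 1) le_rfl
    rw [List.getLast?_eq_getElem?, hlen] at hy
    rw [this, List.getElem?_eq_getElem hlp] at hy
    simp only [Option.map_some, Option.some.injEq] at hy
    exact ⟨g, hy⟩
  · rintro ⟨g, rfl⟩
    refine ⟨p.map (g • ·), smul_wpath x₀ step choice hx₀ hstep hchoice g p hp, ?_⟩
    rw [List.getLast?_eq_getElem?, List.length_map, List.getElem?_map,
      List.getElem?_eq_getElem hlp]
    rfl
end

section
/- In the setting of the witnessed-path lemma, if one sequence (b₁*,…,bₖ*) ∈ P is witnessed (for every i < k, choice(bᵢ*) is an orbit of the pointwise stabilizer of (b₁*,…,bᵢ*)), then every sequence (b₁,…,bₖ) ∈ P is witnessed: for every i < k, choice(bᵢ) is an orbit of the pointwise stabilizer of (b₁,…,bᵢ). -/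
private lemma conj_aux {G X : Type*} [Group G] [MulAction G X]
    (x₀ : X) (step : X → X → X) (choice : X → Set X)
    (hstep : ∀ (g : G) (b c : X), step (g • b) (g • c) = g • step b c)
    (hchoice : ∀ (g : G) (b : X), choice (g • b) = (fun c => g • c) '' choice b)
    (p : List X) (hp : IsWPath x₀ step choice p) (hw : Witnessed G choice p)
    (q : List X) (hq : IsWPath x₀ step choice q) :
    ∀ i, i < p.length → i < q.length →
      ∃ g : G, ∀ j ≤ i, ∀ x y, p[j]? = some x → q[j]? = some y → g • x = y := by
  intro i
  induction i with
  | zero =>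
    intro _ _
    refine ⟨1, ?_⟩
    intro j hj x y hx hy
    interval_cases j
    rw [hp.2.1] at hx
    rw [hq.2.1] at hy
    rw [(Option.some_injective X hx.symm), (Option.some_injective X hy.symm), one_smul]
  | succ i ih =>
    intro hip hiq
    obtain ⟨g, hg⟩ := ih (Nat.lt_of_succ_lt hip) (Nat.lt_of_succ_lt hiq)
    obtain ⟨bp, cp, hbp, hcp, hsp⟩ := hp.2.2.2.2 i hip
    obtain ⟨bq, cq, hbq, hcq, hsq⟩ := hq.2.2.2.2 i hiq
    have hgb : g • bp = bq := hg i le_rfl bp bq hbp hbq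
    have hmem : cq ∈ (fun c => g • c) '' choice bp := by
      rw [← hchoice, hgb]; exact hcq
    obtain ⟨cp', hcp', hgc'⟩ := hmem
    have hgc : g • cp' = cq := hgc'
    have horb := hw i hip bp hbp cp hcp
    have hmem2 : cp' ∈ {d | ∃ h : G,
        (∀ j ≤ i, ∀ x, p[j]? = some x → h • x = x) ∧ d = h • cp} := by
      rw [← horb]; exact hcp'
    obtain ⟨h, hhfix, hcp'eq⟩ := hmem2
    refine ⟨g * h, ?_⟩
    intro j hj x y hx hy
    rcases Nat.lt_or_ge j (i + 1) with hji | hji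
    · have hji' : j ≤ i := Nat.lt_succ_iff.mp hji
      rw [mul_smul, hhfix j hji' x hx]
      exact hg j hji' x y hx hy
    · have hj1 : j = i + 1 := le_antisymm hj hji
      subst hj1
      rw [hsp] at hx
      rw [hsq] at hy
      have hx' : x = step bp cp := (Option.some_injective X hx.symm)
      have hy' : y = step bq cq := (Option.some_injective X hy.symm)
      subst hx'; subst hy'
      have hhbp : h • bp = bp := hhfix i le_rfl bp hbp
      calc (g * h) • step bp cp = g • (h • step bp cp) := mul_smul g h _
        _ = g • step (h • bp) (h • cp) := by rw [hstep]
        _ = g • step bp cp' := by rw [hhbp, ← hcp'eq]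
        _ = step (g • bp) (g • cp') := (hstep g bp cp').symm
        _ = step bq cq := by rw [hgb, hgc]

/-- If one path of the iteration-with-choice process is witnessed, then every
path is witnessed. -/
theorem witnessed_all_or_none {G X : Type*} [Group G] [MulAction G X]
    (x₀ : X) (hx₀ : ∀ g : G, g • x₀ = x₀)
    (step : X → X → X) (choice : X → Set X)
    (hstep : ∀ (g : G) (b c : X), step (g • b) (g • c) = g • step b c)
    (hchoice : ∀ (g : G) (b : X), choice (g • b) = (fun c => g • c) '' choice b)
    (p : List X) (hp : IsWPath x₀ step choice p) (hw : Witnessed G choice p) :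
    ∀ q : List X, IsWPath x₀ step choice q → Witnessed G choice q := by
  intro q hq
  have hm2 : 2 ≤ p.length := hp.1
  have hn2 : 2 ≤ q.length := hq.1
  have hlen : q.length ≤ p.length := by
    by_contra hlen
    push_neg at hlen
    obtain ⟨g, hg⟩ := conj_aux x₀ step choice hstep hchoice p hp hw q hq
      (p.length - 1) (by omega) (by omega)
    have hp1 : p[p.length - 2]? = some (p[p.length - 2]'(by omega)) :=
      List.getElem?_eq_getElem (by omega)
    have hp2 : p[p.length - 1]? = some (p[p.length - 2]'(by omega)) := by
      rw [← hp.2.2.1]; exact hp1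
    have hq1 : q[p.length - 2]? = some (q[p.length - 2]'(by omega)) :=
      List.getElem?_eq_getElem (by omega)
    have hq2 : q[p.length - 1]? = some (q[p.length - 1]'(by omega)) :=
      List.getElem?_eq_getElem (by omega)
    have e1 := hg (p.length - 2) (by omega) _ _ hp1 hq1
    have e2 := hg (p.length - 1) le_rfl _ _ hp2 hq2
    have hne := hq.2.2.2.1 (p.length - 2) (by omega)
    have h12 : p.length - 2 + 1 = p.length - 1 := by omega
    rw [h12] at hne
    exact hne (by rw [hq1, hq2, ← e1, ← e2])
  intro i hi b hb c hc
  have hip : i + 1 < p.length := lt_of_lt_of_le hi hlen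
  obtain ⟨g, hg⟩ := conj_aux x₀ step choice hstep hchoice p hp hw q hq
    i (by omega) (by omega)
  have hpi : p[i]? = some (p[i]'(by omega)) := List.getElem?_eq_getElem (by omega)
  have hgb : g • (p[i]'(by omega)) = b := hg i le_rfl _ _ hpi hb
  have hcb : choice b = (fun e => g • e) '' choice (p[i]'(by omega)) := by
    rw [← hgb, hchoice]
  have hc' : c ∈ (fun e => g • e) '' choice (p[i]'(by omega)) := by
    rw [← hcb]; exact hc
  obtain ⟨c0, hc0, hgc'⟩ := hc'
  have hgc : g • c0 = c := hgc'
  have horb := hw i hip _ hpi c0 hc0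
  ext d
  constructor
  · intro hd
    rw [hcb] at hd
    obtain ⟨e, he, hge⟩ := hd
    rw [horb] at he
    obtain ⟨h, hhfix, hehc⟩ := he
    refine ⟨g * h * g⁻¹, ?_, ?_⟩
    · intro j hj x hx
      have hpj : p[j]? = some (p[j]'(by omega)) := List.getElem?_eq_getElem (by omega)
      have hgj : g • (p[j]'(by omega)) = x := hg j hj _ _ hpj hx
      have hhj : h • (p[j]'(by omega)) = p[j]'(by omega) := hhfix j hj _ hpj
      rw [← hgj, mul_smul, mul_smul, inv_smul_smul, hhj]
    · rw [← hgc, ← hge, hehc, mul_smul, mul_smul, inv_smul_smul]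
  · rintro ⟨k, hkfix, rfl⟩
    rw [hcb]
    refine ⟨(g⁻¹ * k * g) • c0, ?_, ?_⟩
    · rw [horb]
      refine ⟨g⁻¹ * k * g, ?_, rfl⟩
      intro j hj x hx
      have hqj : q[j]? = some (q[j]'(by omega)) := List.getElem?_eq_getElem (by omega)
      have hgj : g • x = q[j]'(by omega) := hg j hj _ _ hx hqj
      have hkj : k • (q[j]'(by omega)) = q[j]'(by omega) := hkfix j hj _ hqj
      rw [mul_smul, mul_smul, hgj, hkj, inv_smul_eq_iff, hgj]
    · simp only [← hgc, mul_smul, smul_inv_smul]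
end

section
/- Let G = (V,E) be a finite simple graph, g : E → F₂, and let e₁, e₂ ∈ E be two distinct edges sharing a common vertex. Define g' : E → F₂ by flipping g exactly on e₁ and e₂ (g'(e) = g(e)+1 for e ∈ {e₁,e₂}, g'(e) = g(e) otherwise). Then the CFI graphs CFI(G,g) and CFI(G,g') are isomorphic. -/
/-- Gadget vertices of the CFI graph over a base graph `G`: pairs `(u, a)` where
`u` is a base vertex and `a : N(u) → 𝔽₂` has sum `0` over the neighborhood of
`u` (encoded as a function on all of `V` vanishing outside `N(u)`). -/
def CFIGadgetV {V : Type*} [Fintype V] (G : SimpleGraph V) :=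
  {p : V × (V → ZMod 2) // (∀ w, ¬ G.Adj p.1 w → p.2 w = 0) ∧ ∑ w, p.2 w = 0}

/-- Edge vertices of the CFI graph over a base graph `G`: triples `(u, v, i)`
where `(u, v)` is an ordered pair with `{u,v}` an edge of `G` and `i ∈ 𝔽₂`. -/
def CFIEdgeV {V : Type*} (G : SimpleGraph V) :=
  {q : V × V × ZMod 2 // G.Adj q.1 q.2.1}

/-- The CFI graph `CFI(G, g)` of a base graph `G` with respect to
`g : E(G) → 𝔽₂`: a gadget vertex `(u, a)` is adjacent to an edge vertex
`(u, v, i)` whenever `a v = i`, and edge vertices `(u, v, i)` and `(v, u, j)`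
are adjacent whenever `i + j = g {u, v}`. -/
def CFIGraph {V : Type*} [Fintype V] (G : SimpleGraph V) (g : Sym2 V → ZMod 2) :
    SimpleGraph (CFIGadgetV G ⊕ CFIEdgeV G) :=
  SimpleGraph.fromRel (fun x y =>
    (∃ (p : CFIGadgetV G) (q : CFIEdgeV G),
        x = Sum.inl p ∧ y = Sum.inr q ∧ p.1.1 = q.1.1 ∧ p.1.2 q.1.2.1 = q.1.2.2) ∨
    (∃ q q' : CFIEdgeV G,
        x = Sum.inr q ∧ y = Sum.inr q' ∧ q.1.1 = q'.1.2.1 ∧ q.1.2.1 = q'.1.1 ∧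
        q.1.2.2 + q'.1.2.2 = g (Sym2.mk q.1.1 q.1.2.1)))

section Aux

variable {V : Type*} [Fintype V] [DecidableEq V]

/-- The twist value added at ordered pair `(x, y)`. -/
def cfiTwist (u v w x y : V) : ZMod 2 :=
  if x = u ∧ (y = v ∨ y = w) then 1 else 0

lemma cfiTwist_add_self (u v w x y : V) (i : ZMod 2) :
    i + cfiTwist u v w x y + cfiTwist u v w x y = i := by
  rw [add_assoc]
  unfold cfiTwist
  split
  · rw [show (1 : ZMod 2) + 1 = 0 from rfl, add_zero]
  · rw [add_zero, add_zero]

/-- The twisting map on CFI vertices. -/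
def cfiFlip (G : SimpleGraph V) (u v w : V) (hv : G.Adj u v) (hw : G.Adj u w)
    (hvw : v ≠ w) :
    CFIGadgetV G ⊕ CFIEdgeV G → CFIGadgetV G ⊕ CFIEdgeV G :=
  Sum.elim
    (fun p => Sum.inl ⟨(p.1.1, fun y => p.1.2 y + cfiTwist u v w p.1.1 y), by
      refine ⟨fun y hy => ?_, ?_⟩
      · dsimp only at hy ⊢
        rw [p.2.1 y hy]
        have ht : cfiTwist u v w p.1.1 y = 0 := by
          unfold cfiTwist
          rw [if_neg]
          rintro ⟨he, rfl | rfl⟩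
          · exact hy (he ▸ hv)
          · exact hy (he ▸ hw)
        simp [ht]
      · dsimp only
        rw [Finset.sum_add_distrib, p.2.2, zero_add]
        unfold cfiTwist
        by_cases hx : p.1.1 = u
        · have key : ∀ y : V, (if p.1.1 = u ∧ (y = v ∨ y = w) then (1 : ZMod 2) else 0)
              = (if y = v then 1 else 0) + (if y = w then 1 else 0) := by
            intro y
            by_cases h1 : y = v <;> by_cases h2 : y = w <;> simp_all
          simp only [key, Finset.sum_add_distrib, Finset.sum_ite_eq', Finset.mem_univ,
            if_true]
          decide
        · simp [hx]⟩)
    (fun q => Sum.inr ⟨(q.1.1, q.1.2.1, q.1.2.2 + cfiTwist u v w q.1.1 q.1.2.1), q.2⟩)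

lemma cfiFlip_invol (G : SimpleGraph V) (u v w : V) (hv : G.Adj u v) (hw : G.Adj u w)
    (hvw : v ≠ w) : Function.Involutive (cfiFlip G u v w hv hw hvw) := by
  rintro (p | q)
  · simp only [cfiFlip, Sum.elim_inl, Sum.inl.injEq]
    show Sum.inl _ = Sum.inl p
    congr 1
    apply Subtype.ext
    dsimp
    rw [Prod.mk.injEq]
    exact ⟨rfl, funext fun y => cfiTwist_add_self u v w p.1.1 y (p.1.2 y)⟩
  · simp only [cfiFlip, Sum.elim_inr, Sum.inr.injEq]
    show Sum.inr _ = Sum.inr q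
    congr 1
    apply Subtype.ext
    dsimp
    rw [Prod.mk.injEq, Prod.mk.injEq]
    exact ⟨rfl, rfl, cfiTwist_add_self u v w q.1.1 q.1.2.1 q.1.2.2⟩

lemma cfiTwist_sum (G : SimpleGraph V) (u v w a b : V) (hv : G.Adj u v) (hw : G.Adj u w)
    (hvw : v ≠ w) (hab : G.Adj a b) :
    cfiTwist u v w a b + cfiTwist u v w b a =
      if Sym2.mk a b = Sym2.mk u v ∨ Sym2.mk a b = Sym2.mk u w then 1 else 0 := by
  have huv : u ≠ v := hv.ne
  have huw : u ≠ w := hw.ne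
  have hab' : a ≠ b := hab.ne
  unfold cfiTwist
  simp only [Sym2.eq_iff]
  by_cases h1 : a = u <;> by_cases h2 : b = u <;> by_cases h3 : a = v <;>
    by_cases h4 : b = v <;> by_cases h5 : a = w <;> by_cases h6 : b = w <;>
    simp_all

lemma cfiFlip_adj (G : SimpleGraph V) (u v w : V) (hv : G.Adj u v) (hw : G.Adj u w)
    (hvw : v ≠ w) (g g' : Sym2 V → ZMod 2)
    (hg' : ∀ e, g' e =
      if e = Sym2.mk u v ∨ e = Sym2.mk u w then g e + 1 else g e)
    {x y : CFIGadgetV G ⊕ CFIEdgeV G} (h : (CFIGraph G g).Adj x y) :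
    (CFIGraph G g').Adj (cfiFlip G u v w hv hw hvw x) (cfiFlip G u v w hv hw hvw y) := by
  have hf : True := trivial
  have key : ∀ x y : CFIGadgetV G ⊕ CFIEdgeV G,
      ((∃ (p : CFIGadgetV G) (q : CFIEdgeV G),
          x = Sum.inl p ∧ y = Sum.inr q ∧ p.1.1 = q.1.1 ∧ p.1.2 q.1.2.1 = q.1.2.2) ∨
       (∃ q q' : CFIEdgeV G,
          x = Sum.inr q ∧ y = Sum.inr q' ∧ q.1.1 = q'.1.2.1 ∧ q.1.2.1 = q'.1.1 ∧
          q.1.2.2 + q'.1.2.2 = g (Sym2.mk q.1.1 q.1.2.1))) →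
      ((∃ (p : CFIGadgetV G) (q : CFIEdgeV G),
          cfiFlip G u v w hv hw hvw x = Sum.inl p ∧ cfiFlip G u v w hv hw hvw y = Sum.inr q ∧ p.1.1 = q.1.1 ∧ p.1.2 q.1.2.1 = q.1.2.2) ∨
       (∃ q q' : CFIEdgeV G,
          cfiFlip G u v w hv hw hvw x = Sum.inr q ∧ cfiFlip G u v w hv hw hvw y = Sum.inr q' ∧ q.1.1 = q'.1.2.1 ∧ q.1.2.1 = q'.1.1 ∧
          q.1.2.2 + q'.1.2.2 = g' (Sym2.mk q.1.1 q.1.2.1))) := by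
    rintro x y (⟨p, q, rfl, rfl, h1, h2⟩ | ⟨q, q', rfl, rfl, h1, h2, h3⟩)
    · left
      refine ⟨_, _, rfl, rfl, ?_⟩
      simp only [cfiFlip, Sum.elim_inl, Sum.elim_inr]
      exact ⟨h1, by rw [h2, h1]⟩
    · right
      refine ⟨_, _, rfl, rfl, ?_⟩
      simp only [cfiFlip, Sum.elim_inr]
      refine ⟨h1, h2, ?_⟩
      have hadj : G.Adj q.1.1 q.1.2.1 := q.2
      have hsum := cfiTwist_sum G u v w q.1.1 q.1.2.1 hv hw hvw hadj
      have hgg : g' (Sym2.mk q.1.1 q.1.2.1) = g (Sym2.mk q.1.1 q.1.2.1) +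
          (cfiTwist u v w q.1.1 q.1.2.1 + cfiTwist u v w q.1.2.1 q.1.1) := by
        rw [hg', hsum]
        split <;> simp
      rw [hgg, ← h3, ← h1, ← h2]
      ring
  rw [CFIGraph, SimpleGraph.fromRel_adj] at h ⊢
  obtain ⟨hne, h⟩ := h
  refine ⟨fun he => hne ?_, ?_⟩
  · have := congrArg (cfiFlip G u v w hv hw hvw) he
    rwa [cfiFlip_invol G u v w hv hw hvw x, cfiFlip_invol G u v w hv hw hvw y] at this
  · rcases h with h | h
    · exact Or.inl (key x y h)
    · exact Or.inr (key y x h)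

end Aux

/-- Flipping the edge-labeling `g` of a CFI graph on two distinct edges
`{u,v}` and `{u,w}` sharing the common vertex `u` yields an isomorphic CFI
graph. -/
theorem cfi_flip_two_incident_edges_iso {V : Type*} [Fintype V] [DecidableEq V]
    (G : SimpleGraph V) (u v w : V) (hv : G.Adj u v) (hw : G.Adj u w)
    (hvw : v ≠ w) (g g' : Sym2 V → ZMod 2)
    (hg' : ∀ e, g' e =
      if e = Sym2.mk u v ∨ e = Sym2.mk u w then g e + 1 else g e) :
    Nonempty (CFIGraph G g ≃g CFIGraph G g') := by
  have hg : ∀ e, g e =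
      if e = Sym2.mk u v ∨ e = Sym2.mk u w then g' e + 1 else g' e := by
    intro e
    rw [hg']
    split
    · rw [add_assoc, show (1 : ZMod 2) + 1 = 0 from rfl, add_zero]
    · rfl
  refine ⟨⟨Function.Involutive.toPerm _ (cfiFlip_invol G u v w hv hw hvw), ?_⟩⟩
  intro x y
  simp only [Function.Involutive.coe_toPerm]
  constructor
  · intro h
    have := cfiFlip_adj G u v w hv hw hvw g' g hg h
    rwa [cfiFlip_invol G u v w hv hw hvw x, cfiFlip_invol G u v w hv hw hvw y] at this
  · exact cfiFlip_adj G u v w hv hw hvw g g' hg'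
end

section
/- Let G = (V,E) be a finite connected simple graph and g, g' : E → F₂ with Σ_{e∈E} g(e) = Σ_{e∈E} g'(e). Then CFI(G,g) ≅ CFI(G,g'). -/
set_option linter.unusedSectionVars false

section CFIAux

variable {V : Type*} [Fintype V] [DecidableEq V] {G : SimpleGraph V}

private lemma zmod2_cancel : ∀ x y : ZMod 2, x + y + y = x := by decide
private lemma zmod2_self : ∀ x : ZMod 2, x + x = 0 := by decide

/-! ### Walk twists -/

def walkTwist : ∀ {a b : V}, G.Walk a b → (V → V → ZMod 2)
  | _, _, SimpleGraph.Walk.nil => fun _ _ => 0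
  | a, _, @SimpleGraph.Walk.cons _ _ _ c _ _ p => fun v w =>
      (if (v = a ∧ w = c) ∨ (v = c ∧ w = a) then 1 else 0) + walkTwist p v w

lemma walkTwist_cons {a c b : V} (h : G.Adj a c) (p : G.Walk c b) :
    walkTwist (SimpleGraph.Walk.cons h p) = fun v w =>
      (if (v = a ∧ w = c) ∨ (v = c ∧ w = a) then 1 else 0) + walkTwist p v w := rfl

lemma walkTwist_symm {a b : V} (p : G.Walk a b) (v w : V) :
    walkTwist p v w = walkTwist p w v := by
  induction p with
  | nil => rfl
  | cons h p ih =>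
    rw [walkTwist_cons]
    beta_reduce
    rw [ih]
    refine congrArg₂ (· + ·) (if_congr ?_ rfl rfl) rfl
    tauto

lemma walkTwist_not_adj {a b : V} (p : G.Walk a b) (v w : V) (hvw : ¬ G.Adj v w) :
    walkTwist p v w = 0 := by
  induction p with
  | nil => rfl
  | cons h p ih =>
    rw [walkTwist_cons]
    beta_reduce
    rw [ih]
    rw [if_neg, zero_add]
    rintro (⟨rfl, rfl⟩ | ⟨rfl, rfl⟩)
    · exact hvw h
    · exact hvw h.symm

lemma walkTwist_sum {a b : V} (p : G.Walk a b) (v : V) :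
    ∑ w, walkTwist p v w = (if v = a then 1 else 0) + (if v = b then 1 else 0) := by
  induction p with
  | nil => simp [walkTwist, zmod2_self]
  | cons h p ih =>
    rename_i x y z
    rw [walkTwist_cons]
    beta_reduce
    rw [Finset.sum_add_distrib, ih]
    have hxy : x ≠ y := h.ne
    have : ∑ w, (if (v = x ∧ w = y) ∨ (v = y ∧ w = x) then (1 : ZMod 2) else 0)
        = (if v = x then 1 else 0) + (if v = y then 1 else 0) := by
      by_cases hvx : v = x
      · subst hvx
        have : ∀ w, ((v = v ∧ w = y) ∨ (v = y ∧ w = v)) ↔ w = y := by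
          intro w; constructor
          · rintro (⟨_, rfl⟩ | ⟨rfl, rfl⟩) <;> tauto
          · rintro rfl; tauto
        simp only [this]
        simp [Finset.sum_ite_eq', hxy]
      · by_cases hvy : v = y
        · subst hvy
          have : ∀ w, ((v = x ∧ w = v) ∨ (v = v ∧ w = x)) ↔ w = x := by
            intro w; constructor
            · rintro (⟨rfl, rfl⟩ | ⟨_, rfl⟩) <;> tauto
            · rintro rfl; tauto
          simp only [this]
          simp [Finset.sum_ite_eq', hvx]
        · have : ∀ w, ¬ ((v = x ∧ w = y) ∨ (v = y ∧ w = x)) := by tauto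
          simp [this, hvx, hvy]
    rw [this]
    generalize (if v = x then (1:ZMod 2) else 0) = A
    generalize (if v = y then (1:ZMod 2) else 0) = B
    generalize (if v = z then (1:ZMod 2) else 0) = C
    revert A B C; decide

/-! ### Edge sums vs ordered-pair sums -/

lemma sum_edgeFinset_eq_sum_pairs [LinearOrder V] [DecidableRel G.Adj] (f : Sym2 V → ZMod 2) :
    ∑ e ∈ G.edgeFinset, f e =
      ∑ p ∈ Finset.univ.filter (fun p : V × V => G.Adj p.1 p.2 ∧ p.1 < p.2), f (s(p.1, p.2)) := by
  have himg : G.edgeFinset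
      = (Finset.univ.filter (fun p : V × V => G.Adj p.1 p.2 ∧ p.1 < p.2)).image (fun p : V × V => s(p.1, p.2)) := by
    ext e
    induction e with
    | _ x y =>
      simp only [SimpleGraph.mem_edgeFinset, SimpleGraph.mem_edgeSet, Finset.mem_image,
        Finset.mem_filter, Finset.mem_univ, true_and]
      constructor
      · intro hxy
        rcases lt_or_gt_of_ne hxy.ne with hlt | hlt
        · exact ⟨(x, y), ⟨hxy, hlt⟩, rfl⟩
        · exact ⟨(y, x), ⟨hxy.symm, hlt⟩, Sym2.eq_swap⟩
      · rintro ⟨⟨a, b⟩, ⟨hadj, _⟩, he⟩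
        rw [← SimpleGraph.mem_edgeSet, ← he]
        exact hadj
  rw [himg, Finset.sum_image]
  intro p hp q hq hpq
  simp only [Finset.coe_filter, Set.mem_setOf_eq, Finset.mem_coe, Finset.mem_filter] at hp hq
  rcases Sym2.mk_eq_mk_iff.1 hpq with h | h
  · exact h
  · exfalso
    have h1 : p.1 = q.2 := by rw [h]; rfl
    have h2 : p.2 = q.1 := by rw [h]; rfl
    have := hp.2.2
    rw [h1, h2] at this
    exact absurd hq.2.2 (asymm this)

/-! ### The twist map on CFI vertices -/

variable (G) in
def cfiRel (g : Sym2 V → ZMod 2) (x y : CFIGadgetV G ⊕ CFIEdgeV G) : Prop :=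
  (∃ (p : CFIGadgetV G) (q : CFIEdgeV G),
      x = Sum.inl p ∧ y = Sum.inr q ∧ p.1.1 = q.1.1 ∧ p.1.2 q.1.2.1 = q.1.2.2) ∨
  (∃ q q' : CFIEdgeV G,
      x = Sum.inr q ∧ y = Sum.inr q' ∧ q.1.1 = q'.1.2.1 ∧ q.1.2.1 = q'.1.1 ∧
      q.1.2.2 + q'.1.2.2 = g (s(q.1.1, q.1.2.1)))

lemma CFIGraph_eq_fromRel (g : Sym2 V → ZMod 2) :
    CFIGraph G g = SimpleGraph.fromRel (cfiRel G g) := rfl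

variable (G) in
def twistMap (F : V → V → ZMod 2)
    (hsupp : ∀ u v, ¬ G.Adj u v → F u v = 0) (hsum0 : ∀ u, ∑ v, F u v = 0) :
    CFIGadgetV G ⊕ CFIEdgeV G → CFIGadgetV G ⊕ CFIEdgeV G
  | Sum.inl p => Sum.inl ⟨(p.1.1, fun w => p.1.2 w + F p.1.1 w), by
      refine ⟨fun w hw => ?_, ?_⟩
      · show p.1.2 w + F p.1.1 w = 0
        rw [p.2.1 w hw, hsupp _ _ hw, add_zero]
      · show ∑ w, (p.1.2 w + F p.1.1 w) = 0
        rw [Finset.sum_add_distrib, p.2.2, hsum0 p.1.1, add_zero]⟩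
  | Sum.inr q => Sum.inr ⟨(q.1.1, q.1.2.1, q.1.2.2 + F q.1.1 q.1.2.1), q.2⟩

lemma twistMap_involutive (F : V → V → ZMod 2)
    (hsupp : ∀ u v, ¬ G.Adj u v → F u v = 0) (hsum0 : ∀ u, ∑ v, F u v = 0) :
    Function.Involutive (twistMap G F hsupp hsum0) := by
  rintro (p | q)
  · simp only [twistMap]
    congr 1
    apply Subtype.ext
    refine Prod.ext rfl ?_
    funext w
    exact zmod2_cancel _ _
  · simp only [twistMap]
    congr 1
    apply Subtype.ext
    exact Prod.ext rfl (Prod.ext rfl (zmod2_cancel _ _))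

lemma twist_cfiRel (F : V → V → ZMod 2)
    (hsupp : ∀ u v, ¬ G.Adj u v → F u v = 0) (hsum0 : ∀ u, ∑ v, F u v = 0)
    {g g' : Sym2 V → ZMod 2}
    (hF : ∀ u v, G.Adj u v → g' (s(u, v)) = g (s(u, v)) + (F u v + F v u))
    {x y} (hxy : cfiRel G g x y) :
    cfiRel G g' (twistMap G F hsupp hsum0 x) (twistMap G F hsupp hsum0 y) := by
  rcases hxy with ⟨p, q, rfl, rfl, h1, h2⟩ | ⟨q, q', rfl, rfl, h1, h2, h3⟩
  · refine Or.inl ⟨_, _, rfl, rfl, h1, ?_⟩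
    show p.1.2 q.1.2.1 + F p.1.1 q.1.2.1 = q.1.2.2 + F q.1.1 q.1.2.1
    rw [h1, h2]
  · refine Or.inr ⟨_, _, rfl, rfl, h1, h2, ?_⟩
    show (q.1.2.2 + F q.1.1 q.1.2.1) + (q'.1.2.2 + F q'.1.1 q'.1.2.1)
        = g' (s(q.1.1, q.1.2.1))
    rw [hF q.1.1 q.1.2.1 q.2, ← h1, ← h2]
    have key : ∀ a b c d e : ZMod 2, a + b = e → (a + c) + (b + d) = e + (c + d) := by decide
    exact key _ _ _ _ _ h3

lemma twist_adj (F : V → V → ZMod 2)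
    (hsupp : ∀ u v, ¬ G.Adj u v → F u v = 0) (hsum0 : ∀ u, ∑ v, F u v = 0)
    {g g' : Sym2 V → ZMod 2}
    (hF : ∀ u v, G.Adj u v → g' (s(u, v)) = g (s(u, v)) + (F u v + F v u))
    {x y} (hxy : (CFIGraph G g).Adj x y) :
    (CFIGraph G g').Adj (twistMap G F hsupp hsum0 x) (twistMap G F hsupp hsum0 y) := by
  rw [CFIGraph_eq_fromRel, SimpleGraph.fromRel_adj] at hxy ⊢
  obtain ⟨hne, hrel⟩ := hxy
  refine ⟨fun hc => hne ((twistMap_involutive F hsupp hsum0).injective hc), ?_⟩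
  rcases hrel with hr | hr
  · exact Or.inl (twist_cfiRel F hsupp hsum0 hF hr)
  · exact Or.inr (twist_cfiRel F hsupp hsum0 hF hr)

end CFIAux
/-- Two CFI graphs over the same finite connected base graph whose
edge-labelings have the same total sum (in `𝔽₂`) are isomorphic. -/
theorem cfi_same_parity_iso {V : Type*} [Fintype V] [DecidableEq V]
    (G : SimpleGraph V) [DecidableRel G.Adj] (hconn : G.Connected)
    (g g' : Sym2 V → ZMod 2)
    (hsum : ∑ e ∈ G.edgeFinset, g e = ∑ e ∈ G.edgeFinset, g' e) :
    Nonempty (CFIGraph G g ≃g CFIGraph G g') := by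
  classical
  letI : LinearOrder V := LinearOrder.lift' (Fintype.equivFin V) (Fintype.equivFin V).injective
  obtain ⟨r⟩ := hconn.nonempty
  set dif : Sym2 V → ZMod 2 := fun e => g e + g' e with hdif
  have hsumdif : ∑ e ∈ G.edgeFinset, dif e = 0 := by
    simp only [hdif]
    rw [Finset.sum_add_distrib, hsum]
    exact zmod2_self _
  set f0 : V → V → ZMod 2 :=
    fun u v => if G.Adj u v ∧ u < v then dif (s(u, v)) else 0 with hf0
  set d : V → ZMod 2 := fun u => ∑ v, f0 u v with hd
  have hdtot : ∑ u, d u = 0 := by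
    simp only [hd]
    have hprod : ∑ u, ∑ v, f0 u v = ∑ p : V × V, f0 p.1 p.2 :=
      (Fintype.sum_prod_type (f := fun p : V × V => f0 p.1 p.2)).symm
    rw [hprod]
    have : ∑ p : V × V, f0 p.1 p.2
        = ∑ p ∈ Finset.univ.filter (fun p : V × V => G.Adj p.1 p.2 ∧ p.1 < p.2),
            dif (s(p.1, p.2)) := by
      rw [Finset.sum_filter]
    rw [this, ← sum_edgeFinset_eq_sum_pairs, hsumdif]
  have hf0supp : ∀ u v, ¬ G.Adj u v → f0 u v = 0 := by
    intro u v huv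
    simp only [hf0]
    rw [if_neg (fun hc => huv hc.1)]
  -- the correction term
  set W : ∀ u, G.Walk r u := fun u => (hconn.preconnected r u).some with hW
  set k : V → V → ZMod 2 := fun v w => ∑ u, d u * walkTwist (W u) v w with hk
  have hksymm : ∀ v w, k v w = k w v := by
    intro v w
    simp only [hk]
    exact Finset.sum_congr rfl fun u _ => by rw [walkTwist_symm]
  have hksupp : ∀ v w, ¬ G.Adj v w → k v w = 0 := by
    intro v w hvw
    simp only [hk]
    refine Finset.sum_eq_zero fun u _ => ?_
    rw [walkTwist_not_adj _ _ _ hvw, mul_zero]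
  have hksum : ∀ v, ∑ w, k v w = d v := by
    intro v
    simp only [hk]
    rw [Finset.sum_comm]
    have : ∀ u, ∑ w, d u * walkTwist (W u) v w
        = d u * (if v = r then 1 else 0) + (if v = u then d u else 0) := by
      intro u
      rw [← Finset.mul_sum, walkTwist_sum (W u) v, mul_add]
      congr 1
      simp [mul_ite]
    rw [Finset.sum_congr rfl fun u _ => this u, Finset.sum_add_distrib,
      ← Finset.sum_mul, hdtot, zero_mul, zero_add, Finset.sum_ite_eq]
    simp
  set F : V → V → ZMod 2 := fun u v => f0 u v + k u v with hF
  have hFsupp : ∀ u v, ¬ G.Adj u v → F u v = 0 := by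
    intro u v huv
    simp only [hF]
    rw [hf0supp u v huv, hksupp u v huv, add_zero]
  have hFsum : ∀ u, ∑ v, F u v = 0 := by
    intro u
    simp only [hF]
    rw [Finset.sum_add_distrib, hksum]
    have : ∑ x, f0 u x = d u := rfl
    rw [this]
    exact zmod2_self _
  have hFedge : ∀ u v, G.Adj u v → F u v + F v u = dif (s(u, v)) := by
    intro u v huv
    simp only [hF]
    have hk0 : k u v + k v u = 0 := by rw [hksymm u v]; exact zmod2_self _
    have hswap : ∀ a b c d : ZMod 2, (a + b) + (c + d) = (a + c) + (b + d) := by decide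
    rw [hswap, hk0, add_zero]
    simp only [hf0]
    rcases lt_or_gt_of_ne huv.ne with hlt | hlt
    · rw [if_pos ⟨huv, hlt⟩, if_neg (fun hc => asymm hlt hc.2), add_zero]
    · rw [if_neg (fun hc => asymm hlt hc.2), if_pos ⟨huv.symm, hlt⟩, zero_add]
      rw [Sym2.eq_swap]
  have hFg : ∀ u v, G.Adj u v →
      g' (s(u, v)) = g (s(u, v)) + (F u v + F v u) := by
    intro u v huv
    rw [hFedge u v huv]
    have : ∀ a b : ZMod 2, b = a + (a + b) := by decide
    exact this _ _
  have hFg' : ∀ u v, G.Adj u v →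
      g (s(u, v)) = g' (s(u, v)) + (F u v + F v u) := by
    intro u v huv
    rw [hFedge u v huv]
    have : ∀ a b : ZMod 2, a = b + (a + b) := by decide
    exact this _ _
  have hinv := twistMap_involutive F hFsupp hFsum
  refine ⟨⟨hinv.toPerm, ?_⟩⟩
  intro x y
  constructor
  · intro hadj
    have := twist_adj F hFsupp hFsum hFg' hadj
    simpa [hinv x, hinv y] using this
  · exact twist_adj F hFsupp hFsum hFg
end

section
/- Let a finite group G act on a finite set A. Suppose s assigns to each duplicate-free tuple ā over A that does not enumerate all of A a set s(ā) ⊆ A disjoint from the entries of ā, such that s(ā) is an orbit of the pointwise stabilizer G_ā and s is G-equivariant (s(g·ā) = g·s(ā)). Define Labels(ā) recursively: Labels(ā) = {ā} if ā enumerates all of A, and Labels(ā) = ⋃_{u ∈ s(ā)} Labels(āu) otherwise (āu denotes appending u). Then for every duplicate-free tuple ā, Labels(ā) is an orbit of the pointwise stabilizer G_ā acting coordinatewise on tuples. -/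
/-- Gurevich's labeling lemma.  Let a finite group `G` act on a finite set `A`,
and let `s` assign to each duplicate-free tuple `ā` over `A` that does not
enumerate all of `A` a set `s ā ⊆ A` disjoint from the entries of `ā`, such
that `s ā` is an orbit of the pointwise stabilizer `G_ā` and `s` is
`G`-equivariant.  Define `Labels ā = {ā}` if `ā` enumerates all of `A`, and
`Labels ā = ⋃_{u ∈ s ā} Labels (ā ++ [u])` otherwise.  Then for every
duplicate-free tuple `ā`, `Labels ā` is an orbit of the pointwise stabilizer
`G_ā` acting coordinatewise on tuples. -/
theorem labels_is_stabilizer_orbit {G A : Type*} [Group G] [Finite G]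
    [Fintype A] [MulAction G A]
    (s : List A → Set A)
    (hdisj : ∀ l : List A, l.Nodup → ¬(∀ a : A, a ∈ l) → ∀ u ∈ s l, u ∉ l)
    (horb : ∀ l : List A, l.Nodup → ¬(∀ a : A, a ∈ l) →
      (s l).Nonempty ∧
      ∀ u ∈ s l, s l = {v | ∃ g : G, (∀ a ∈ l, g • a = a) ∧ v = g • u})
    (hequiv : ∀ (g : G) (l : List A), l.Nodup → ¬(∀ a : A, a ∈ l) →
      s (l.map (fun a => g • a)) = (fun a => g • a) '' s l)
    (Labels : List A → Set (List A))
    (hL1 : ∀ l : List A, (∀ a : A, a ∈ l) → Labels l = {l})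
    (hL2 : ∀ l : List A, ¬(∀ a : A, a ∈ l) →
      Labels l = ⋃ u ∈ s l, Labels (l ++ [u])) :
    ∀ l : List A, l.Nodup →
      ∃ m : List A, Labels l =
        {m' | ∃ g : G, (∀ a ∈ l, g • a = a) ∧ m' = m.map (fun a => g • a)} := by
  
  classical
  -- a nodup list of full length enumerates A
  have hfull_of_len : ∀ l : List A, l.Nodup → Fintype.card A ≤ l.length →
      ∀ a : A, a ∈ l := by
    intro l hl hlen a
    have h1 : l.toFinset.card = l.length := List.toFinset_card_of_nodup hl
    have h3 := Finset.card_le_univ l.toFinset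
    have h2 : l.toFinset = Finset.univ := by
      apply Finset.eq_univ_of_card
      omega
    have : a ∈ l.toFinset := h2 ▸ Finset.mem_univ a
    simpa using this
  -- mapped list stays nodup
  have hmapnodup : ∀ (g : G) (l : List A), l.Nodup → (l.map (fun a => g • a)).Nodup := by
    intro g l hl
    exact hl.map (fun a b h => by simpa using congrArg (fun x => g⁻¹ • x) h)
  have hmapfull : ∀ (g : G) (l : List A),
      (∀ a : A, a ∈ l.map (fun a => g • a)) ↔ (∀ a : A, a ∈ l) := by
    intro g l
    constructor
    · intro h a
      obtain ⟨b, hb, hba⟩ := List.mem_map.mp (h (g • a))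
      have : b = a := by simpa using congrArg (fun x => g⁻¹ • x) hba
      rwa [← this]
    · intro h a
      exact List.mem_map.mpr ⟨g⁻¹ • a, h _, by simp⟩
  -- equivariance of Labels
  have equivL : ∀ n : ℕ, ∀ l : List A, l.Nodup → Fintype.card A - l.length ≤ n →
      ∀ g : G, Labels (l.map (fun a => g • a)) = (fun m : List A => m.map (fun a => g • a)) '' Labels l := by
    intro n
    induction n with
    | zero =>
      intro l hl hlen g
      have hfull : ∀ a : A, a ∈ l := hfull_of_len l hl (by omega)
      rw [hL1 l hfull, hL1 _ ((hmapfull g l).mpr hfull)]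
      simp
    | succ n ih =>
      intro l hl hlen g
      by_cases hfull : ∀ a : A, a ∈ l
      · rw [hL1 l hfull, hL1 _ ((hmapfull g l).mpr hfull)]
        simp
      · have hmf : ¬ ∀ a : A, a ∈ l.map (fun a => g • a) := fun h => hfull ((hmapfull g l).mp h)
        rw [hL2 _ hmf, hL2 l hfull, hequiv g l hl hfull]
        have hlen' : l.length < Fintype.card A := by
          by_contra h
          exact hfull (hfull_of_len l hl (by omega))
        ext m'
        simp only [Set.mem_iUnion, Set.mem_image, exists_prop]
        constructor
        · rintro ⟨v, ⟨u, hu, rfl⟩, hm⟩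
          have heq : l.map (fun a => g • a) ++ [g • u] = (l ++ [u]).map (fun a => g • a) := by simp
          rw [heq] at hm
          have hnod : (l ++ [u]).Nodup := by
            simp [List.nodup_append, hl, hdisj l hl hfull u hu]
            exact fun a ha h => hdisj l hl hfull u hu (by rw [← h]; exact ha)
          rw [ih (l ++ [u]) hnod (by simp; omega) g] at hm
          obtain ⟨m, hm1, hm2⟩ := hm
          exact ⟨m, ⟨u, hu, hm1⟩, hm2⟩
        · rintro ⟨m, ⟨u, hu, hm1⟩, hm2⟩
          refine ⟨g • u, ⟨u, hu, rfl⟩, ?_⟩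
          have heq : l.map (fun a => g • a) ++ [g • u] = (l ++ [u]).map (fun a => g • a) := by simp
          have hnod : (l ++ [u]).Nodup := by
            simp [List.nodup_append, hl, hdisj l hl hfull u hu]
            exact fun a ha h => hdisj l hl hfull u hu (by rw [← h]; exact ha)
          rw [heq, ih (l ++ [u]) hnod (by simp; omega) g]
          exact ⟨m, hm1, hm2⟩
  -- main induction
  suffices h : ∀ n : ℕ, ∀ l : List A, l.Nodup → Fintype.card A - l.length ≤ n →
      ∃ m : List A, Labels l =
        {m' | ∃ g : G, (∀ a ∈ l, g • a = a) ∧ m' = m.map (fun a => g • a)} by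
    intro l hl
    exact h (Fintype.card A) l hl (by omega)
  intro n
  induction n with
  | zero =>
    intro l hl hlen
    refine ⟨l, ?_⟩
    have hfull : ∀ a : A, a ∈ l := hfull_of_len l hl (by omega)
    rw [hL1 l hfull]
    ext m'
    simp only [Set.mem_singleton_iff, Set.mem_setOf_eq]
    constructor
    · rintro rfl
      exact ⟨1, fun a _ => one_smul G a, by simp⟩
    · rintro ⟨g, hg, rfl⟩
      exact (List.map_congr_left (fun a ha => hg a ha)).trans (List.map_id l)
  | succ n ih =>
    intro l hl hlen
    by_cases hfull : ∀ a : A, a ∈ l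
    · refine ⟨l, ?_⟩
      rw [hL1 l hfull]
      ext m'
      simp only [Set.mem_singleton_iff, Set.mem_setOf_eq]
      constructor
      · rintro rfl
        exact ⟨1, fun a _ => one_smul G a, by simp⟩
      · rintro ⟨g, hg, rfl⟩
        exact (List.map_congr_left (fun a ha => hg a ha)).trans (List.map_id l)
    · have hlen' : l.length < Fintype.card A := by
        by_contra h
        exact hfull (hfull_of_len l hl (by omega))
      obtain ⟨⟨u, hu⟩, hsorb⟩ := horb l hl hfull
      have hnod : (l ++ [u]).Nodup := by
        simp [List.nodup_append, hl, hdisj l hl hfull u hu]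
        exact fun a ha h => hdisj l hl hfull u hu (by rw [← h]; exact ha)
      obtain ⟨m, hm⟩ := ih (l ++ [u]) hnod (by simp; omega)
      have hmem : m ∈ Labels (l ++ [u]) := by
        rw [hm]; exact ⟨1, fun a _ => one_smul G a, by simp⟩
      refine ⟨m, ?_⟩
      rw [hL2 l hfull]
      ext m'
      simp only [Set.mem_iUnion, Set.mem_setOf_eq, exists_prop]
      constructor
      · rintro ⟨v, hv, hm'⟩
        obtain ⟨h, hfix, rfl⟩ := (hsorb u hu ▸ hv : v ∈ {v | ∃ g : G, (∀ a ∈ l, g • a = a) ∧ v = g • u})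
        have hml : l.map (fun a => h • a) = l :=
          (List.map_congr_left (fun a ha => hfix a ha)).trans (List.map_id l)
        have heq : l ++ [h • u] = (l ++ [u]).map (fun a => h • a) := by
          simp [hml]
        rw [heq, equivL n (l ++ [u]) hnod (by simp; omega) h] at hm'
        obtain ⟨k, hk1, hk2⟩ := hm'
        rw [hm] at hk1
        obtain ⟨g', hg', rfl⟩ := hk1
        refine ⟨h * g', fun a ha => ?_, ?_⟩
        · rw [mul_smul, hg' a (List.mem_append_left _ ha), hfix a ha]
        · rw [← hk2]; simp [List.map_map, Function.comp, mul_smul]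
      · rintro ⟨g, hg, rfl⟩
        have hvu : g • u ∈ s l := by
          rw [hsorb u hu]; exact ⟨g, hg, rfl⟩
        refine ⟨g • u, hvu, ?_⟩
        have heq : l ++ [g • u] = (l ++ [u]).map (fun a => g • a) := by
          have : l.map (fun a => g • a) = l := (List.map_congr_left (fun a ha => hg a ha)).trans (List.map_id l)
          simp [this]
        rw [heq, equivL n (l ++ [u]) hnod (by simp; omega) g]
        exact ⟨m, hmem, rfl⟩
end
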